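/- With A = (-f,0), B = (f,0), F₁ = (-v,0), 0 < v < f, r_a = f - v, r_b = f + v: if r = √(r_a·r_b), then the second tangent line from A to the circle centered at (-v, r) of radius r and the second tangent line from B to the same circle are parallel (they do not intersect). -/

import Mathlib

/-- Squared distance from a point `O` to the line through `A` and `E` in the plane. -/
lemma infDist_line_sq (A E O : EuclideanSpace ℝ (Fin 2)) (h : E 1 ≠ A 1) :
    (Metric.infDist O (line[ℝ, A, E] : Set (EuclideanSpace ℝ (Fin 2)))) ^ 2 *
      ((E 0 - A 0) ^ 2 + (E 1 - A 1) ^ 2)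
    = ((E 0 - A 0) * (O 1 - A 1) - (E 1 - A 1) * (O 0 - A 0)) ^ 2 := by
  set d0 := E 0 - A 0 with hd0
  set d1 := E 1 - A 1 with hd1
  set w0 := O 0 - A 0 with hw0
  set w1 := O 1 - A 1 with hw1
  set c := d0 * w1 - d1 * w0 with hc
  have hd1ne : d1 ≠ 0 := sub_ne_zero.mpr h
  have hn : 0 < d0 ^ 2 + d1 ^ 2 := by positivity
  have key : Metric.infDist O (line[ℝ, A, E] : Set (EuclideanSpace ℝ (Fin 2)))
      = Real.sqrt (c ^ 2 / (d0 ^ 2 + d1 ^ 2)) := by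
    set t0 := (w0 * d0 + w1 * d1) / (d0 ^ 2 + d1 ^ 2) with ht0
    have hP : t0 • (E - A) + A ∈ (line[ℝ, A, E] : Set (EuclideanSpace ℝ (Fin 2))) := by
      have := smul_vsub_vadd_mem_affineSpan_pair t0 A E
      simpa [vsub_eq_sub, vadd_eq_add] using this
    have hdistgen : ∀ t : ℝ, dist O (t • (E - A) + A)
        = Real.sqrt ((w0 - t * d0) ^ 2 + (w1 - t * d1) ^ 2) := by
      intro t
      rw [EuclideanSpace.dist_eq, Fin.sum_univ_two]
      congr 1
      simp [Real.dist_eq, hw0, hw1, hd0, hd1]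
      ring_nf
    apply le_antisymm
    · have h1 := Metric.infDist_le_dist_of_mem (x := O) hP
      have h2 : dist O (t0 • (E - A) + A) = Real.sqrt (c ^ 2 / (d0 ^ 2 + d1 ^ 2)) := by
        rw [hdistgen t0]
        congr 1
        rw [ht0, hc]
        field_simp
        ring
      linarith [h1, h2.le, h2.ge]
    · by_contra hcon
      push_neg at hcon
      rw [Metric.infDist_lt_iff ⟨A, left_mem_affineSpan_pair ℝ A E⟩] at hcon
      obtain ⟨q, hq, hlt⟩ := hcon
      have hq' : (q - A) + A ∈ (line[ℝ, A, E] : Set (EuclideanSpace ℝ (Fin 2))) := by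
        simpa using hq
      have hq'' : (q - A) +ᵥ A ∈ line[ℝ, A, E] := by
        simpa [vadd_eq_add, SetLike.mem_coe] using hq'
      obtain ⟨t, ht⟩ := vadd_left_mem_affineSpan_pair.mp hq''
      have hqeq : q = t • (E - A) + A := by
        have : t • (E - A) = q - A := by simpa [vsub_eq_sub] using ht
        rw [this]; abel
      rw [hqeq, hdistgen t] at hlt
      have : Real.sqrt (c ^ 2 / (d0 ^ 2 + d1 ^ 2))
          ≤ Real.sqrt ((w0 - t * d0) ^ 2 + (w1 - t * d1) ^ 2) := by
        apply Real.sqrt_le_sqrt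
        rw [div_le_iff₀ hn]
        have lag : ((w0 - t * d0) ^ 2 + (w1 - t * d1) ^ 2) * (d0 ^ 2 + d1 ^ 2)
            = c ^ 2 + (w0 * d0 + w1 * d1 - t * (d0 ^ 2 + d1 ^ 2)) ^ 2 := by
          rw [hc]; ring
        linarith [lag, sq_nonneg (w0 * d0 + w1 * d1 - t * (d0 ^ 2 + d1 ^ 2))]
      linarith
  rw [key, Real.sq_sqrt (by positivity)]
  field_simp

/-- At the limiting radius `r = √(r_a·r_b) = √(f²-v²)`, the second tangent lines from
`A = (-f,0)` and `B = (f,0)` to the circle of radius `r` centered at `(-v,r)` (tangent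
to the x-axis at `F₁ = (-v,0)`) are parallel: they have no common point. -/
theorem limiting_tangents_parallel (f v r : ℝ) (hv : 0 < v) (hvf : v < f)
    (hr : r = Real.sqrt ((f - v) * (f + v)))
    (A B O : EuclideanSpace ℝ (Fin 2))
    (hA : A = ![-f, 0]) (hB : B = ![f, 0]) (hO : O = ![-v, r]) :
    ¬ ∃ E : EuclideanSpace ℝ (Fin 2), E 1 ≠ 0 ∧
        Metric.infDist O (line[ℝ, A, E] : Set (EuclideanSpace ℝ (Fin 2))) = r ∧
        Metric.infDist O (line[ℝ, B, E] : Set (EuclideanSpace ℝ (Fin 2))) = r := by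
  rintro ⟨E, hE1, h1, h2⟩
  have hA0 : A 0 = -f := by rw [hA]; rfl
  have hA1 : A 1 = 0 := by rw [hA]; rfl
  have hB0 : B 0 = f := by rw [hB]; rfl
  have hB1 : B 1 = 0 := by rw [hB]; rfl
  have hO0 : O 0 = -v := by rw [hO]; rfl
  have hO1 : O 1 = r := by rw [hO]; rfl
  have hprod : 0 < (f - v) * (f + v) := by nlinarith
  have hrpos : 0 < r := by rw [hr]; exact Real.sqrt_pos.mpr hprod
  have hr2 : r ^ 2 = (f - v) * (f + v) := by
    rw [hr, Real.sq_sqrt hprod.le]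
  have eq1 := infDist_line_sq A E O (by rw [hA1]; exact hE1)
  have eq2 := infDist_line_sq B E O (by rw [hB1]; exact hE1)
  rw [h1, hA0, hA1, hO0, hO1] at eq1
  rw [h2, hB0, hB1, hO0, hO1] at eq2
  -- eq1 : r^2 * ((E 0 + f)^2 + E 1 ^2) = ((E 0 + f)*r - E 1*(f - v))^2 (up to ring)
  have k1 : (f - v) * E 1 * (r * (E 0 + f) + v * E 1) * 2 = 0 := by
    linear_combination eq1 - E 1 ^ 2 * hr2
  have k2 : (f + v) * E 1 * (r * (E 0 - f) + v * E 1) * 2 = 0 := by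
    linear_combination -eq2 + E 1 ^ 2 * hr2
  have hfv : f - v ≠ 0 := by linarith
  have hfv' : f + v ≠ 0 := by linarith
  have l1 : r * (E 0 + f) + v * E 1 = 0 := by
    have := mul_eq_zero.mp k1
    rcases this with h | h
    · rcases mul_eq_zero.mp h with h' | h'
      · exact absurd (mul_eq_zero.mp h') (by push_neg; exact ⟨hfv, hE1⟩)
      · exact h'
    · norm_num at h
  have l2 : r * (E 0 - f) + v * E 1 = 0 := by
    have := mul_eq_zero.mp k2
    rcases this with h | h
    · rcases mul_eq_zero.mp h with h' | h'
      · exact absurd (mul_eq_zero.mp h') (by push_neg; exact ⟨hfv', hE1⟩)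
      · exact h'
    · norm_num at h
  have : r * (2 * f) = 0 := by linarith
  have hf : 0 < f := lt_trans hv hvf
  nlinarith
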